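/- Let X be a Polish metric space and f : X → X a uniform homeomorphism (f and f^{-1} uniformly continuous). For a Borel probability measure μ, x ∈ X, ε > 0, s ∈ ℕ, define θ̲_μ^ε(x,s) = inf_{n ≥ s} G_{x,ε,n}(μ), where G_{x,ε,n}(μ) is the integral against μ of the piecewise-linear bump function of D_n(x,·) = max{d(f^k x, f^k y) : −n ≤ k ≤ n} at levels ε, 2ε. Then for every α > 0, ε > 0, s ∈ ℕ, the set {μ ∈ P(X) : θ̲_μ^ε(x,s) ≤ α for μ-a.e. x} is a G_δ subset of P(X) with the weak topology. -/

import Mathlib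

open MeasureTheory
open scoped ENNReal

/-- The two-sided Bowen metric `D_n(x,y) = max{d(f^k x, f^k y) : −n ≤ k ≤ n}`. -/
noncomputable def twoSidedBowenDist {X : Type*} [MetricSpace X] (f : Equiv.Perm X) (n : ℕ)
    (x y : X) : ℝ :=
  (((Finset.Icc (-(n : ℤ)) (n : ℤ)).sup fun i => nndist ((f ^ i) x) ((f ^ i) y) : NNReal) : ℝ)

/-- The piecewise-linear bump function of `D_n(x,·)` at levels `ε, 2ε`. -/
noncomputable def twoSidedBump {X : Type*} [MetricSpace X] (f : Equiv.Perm X) (n : ℕ) (ε : ℝ)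
    (x y : X) : ℝ :=
  max 0 (min 1 (2 - twoSidedBowenDist f n x y / ε))

/-- `θ̲_μ^ε(x,s) = inf_{n ≥ s} G_{x,ε,n}(μ)`, with `G_{x,ε,n}(μ) = ∫ twoSidedBump dμ`. -/
noncomputable def thetaLower {X : Type*} [MetricSpace X] [MeasurableSpace X]
    (f : Equiv.Perm X) (μ : Measure X) (ε : ℝ) (x : X) (s : ℕ) : ℝ :=
  ⨅ n : {m : ℕ // s ≤ m}, ∫ y, twoSidedBump f (n : ℕ) ε x y ∂μ

set_option linter.unusedSectionVars false

section Aux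

variable {X : Type*} [MetricSpace X]

lemma ucPowAux (g : Equiv.Perm X) (hg : UniformContinuous g) (n : ℕ) :
    UniformContinuous ⇑(g ^ n) := by
  induction n with
  | zero => simpa using uniformContinuous_id
  | succ n ih =>
    have h : ⇑(g ^ (n + 1)) = ⇑(g ^ n) ∘ ⇑g := by
      ext x; simp [pow_succ, Equiv.Perm.mul_apply]
    rw [h]; exact ih.comp hg

lemma ucZpow (f : Equiv.Perm X) (hf : UniformContinuous f) (hf' : UniformContinuous f.symm)
    (i : ℤ) : UniformContinuous ⇑(f ^ i) := by
  obtain ⟨n, rfl | rfl⟩ := Int.eq_nat_or_neg i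
  · rw [zpow_natCast]; exact ucPowAux f hf n
  · have h1 : (f ^ (-(n : ℤ))) = (f⁻¹) ^ n := by rw [zpow_neg, zpow_natCast, inv_pow]
    rw [h1]
    refine ucPowAux f⁻¹ ?_ n
    have : ⇑(f⁻¹) = ⇑f.symm := rfl
    rw [this]; exact hf'

lemma IccNe (n : ℕ) : (Finset.Icc (-(n : ℤ)) (n : ℤ)).Nonempty :=
  ⟨0, Finset.mem_Icc.mpr ⟨neg_nonpos.mpr (Int.natCast_nonneg n), Int.natCast_nonneg n⟩⟩

lemma bowen_eq (f : Equiv.Perm X) (n : ℕ) (x y : X) :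
    twoSidedBowenDist f n x y
      = (Finset.Icc (-(n : ℤ)) (n : ℤ)).sup' (IccNe n)
          (fun i => dist ((f ^ i) x) ((f ^ i) y)) := by
  rw [twoSidedBowenDist, ← Finset.sup'_eq_sup (IccNe n)]
  refine (Finset.comp_sup'_eq_sup'_comp (IccNe n) (fun p : NNReal => (p : ℝ))
    (fun a b => by exact NNReal.coe_max a b)).trans ?_
  exact Finset.sup'_congr _ rfl fun i _ => coe_nndist _ _

lemma bowen_nonneg (f : Equiv.Perm X) (n : ℕ) (x y : X) : 0 ≤ twoSidedBowenDist f n x y := by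
  rw [bowen_eq]
  exact le_trans dist_nonneg (Finset.le_sup' (f := fun i => dist ((f ^ i) x) ((f ^ i) y))
    (Finset.mem_Icc.mpr ⟨neg_nonpos.mpr (Int.natCast_nonneg n), Int.natCast_nonneg n⟩)
    (b := (0 : ℤ)))

lemma bowen_self (f : Equiv.Perm X) (n : ℕ) (x : X) : twoSidedBowenDist f n x x = 0 := by
  refine le_antisymm ?_ (bowen_nonneg f n x x)
  rw [bowen_eq]
  exact Finset.sup'_le _ _ fun i _ => by simp

lemma bowen_comm (f : Equiv.Perm X) (n : ℕ) (x y : X) :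
    twoSidedBowenDist f n x y = twoSidedBowenDist f n y x := by
  rw [bowen_eq, bowen_eq]
  exact Finset.sup'_congr _ rfl fun i _ => dist_comm _ _

lemma bowen_triangle (f : Equiv.Perm X) (n : ℕ) (x y z : X) :
    twoSidedBowenDist f n x z ≤ twoSidedBowenDist f n x y + twoSidedBowenDist f n y z := by
  rw [bowen_eq f n x z]
  refine Finset.sup'_le _ _ fun i hi => ?_
  calc dist ((f ^ i) x) ((f ^ i) z)
      ≤ dist ((f ^ i) x) ((f ^ i) y) + dist ((f ^ i) y) ((f ^ i) z) := dist_triangle _ _ _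
    _ ≤ twoSidedBowenDist f n x y + twoSidedBowenDist f n y z := by
        rw [bowen_eq f n x y, bowen_eq f n y z]
        exact add_le_add
          (Finset.le_sup' (f := fun i => dist ((f ^ i) x) ((f ^ i) y)) hi)
          (Finset.le_sup' (f := fun i => dist ((f ^ i) y) ((f ^ i) z)) hi)

lemma bowen_mono (f : Equiv.Perm X) {m n : ℕ} (h : m ≤ n) (x y : X) :
    twoSidedBowenDist f m x y ≤ twoSidedBowenDist f n x y := by
  rw [bowen_eq, bowen_eq]
  refine Finset.sup'_le _ _ fun i hi =>
    Finset.le_sup' (f := fun i => dist ((f ^ i) x) ((f ^ i) y)) ?_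
  rw [Finset.mem_Icc] at hi ⊢
  omega

lemma bowen_modulus (f : Equiv.Perm X) (hf : UniformContinuous f)
    (hf' : UniformContinuous f.symm) (N : ℕ) {δ : ℝ} (hδ : 0 < δ) :
    ∃ η > 0, ∀ a b : X, dist a b < η → twoSidedBowenDist f N a b ≤ δ := by
  have key : ∀ s : Finset ℤ, ∃ η > 0, ∀ a b : X, dist a b < η →
      ∀ i ∈ s, dist ((f ^ i) a) ((f ^ i) b) ≤ δ := by
    intro s
    induction s using Finset.induction_on with
    | empty => exact ⟨1, one_pos, fun a b _ i hi => absurd hi (Finset.notMem_empty i)⟩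
    | insert _ _ hj ih =>
      obtain ⟨η, hη, H⟩ := ih
      rename_i j t
      obtain ⟨η', hη', H'⟩ := Metric.uniformContinuous_iff.mp
        (ucZpow f hf hf' j) δ hδ
      refine ⟨min η η', lt_min hη hη', fun a b hab i hi => ?_⟩
      rcases Finset.mem_insert.mp hi with rfl | hi
      · exact (H' (lt_of_lt_of_le hab (min_le_right _ _))).le
      · exact H a b (lt_of_lt_of_le hab (min_le_left _ _)) i hi
  obtain ⟨η, hη, H⟩ := key (Finset.Icc (-(N : ℤ)) (N : ℤ))
  refine ⟨η, hη, fun a b hab => ?_⟩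
  rw [bowen_eq]
  exact Finset.sup'_le _ _ fun i hi => H a b hab i hi

lemma clamp_le_clamp {a b c : ℝ} (h : a ≤ b + c) (hc : 0 ≤ c) :
    max 0 (min 1 a) ≤ max 0 (min 1 b) + c := by
  apply max_le
  · exact add_nonneg (le_max_left _ _) hc
  · calc min 1 a ≤ min 1 (b + c) := min_le_min le_rfl h
      _ ≤ min (1 + c) (b + c) := min_le_min (by linarith) le_rfl
      _ = min 1 b + c := by
          rcases le_total (1 : ℝ) b with h' | h'
          · rw [min_eq_left (by linarith), min_eq_left h']
          · rw [min_eq_right (by linarith), min_eq_right h']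
      _ ≤ max 0 (min 1 b) + c := by gcongr; exact le_max_right _ _

lemma bump_nonneg (f : Equiv.Perm X) (n : ℕ) (ε : ℝ) (x y : X) :
    0 ≤ twoSidedBump f n ε x y := le_max_left _ _

lemma bump_le_one (f : Equiv.Perm X) (n : ℕ) (ε : ℝ) (x y : X) :
    twoSidedBump f n ε x y ≤ 1 := max_le zero_le_one (min_le_left _ _)

lemma bump_le (f : Equiv.Perm X) (n : ℕ) {ε : ℝ} (hε : 0 < ε) (x x' y y' : X) :
    twoSidedBump f n ε x y ≤ twoSidedBump f n ε x' y'
      + (twoSidedBowenDist f n x x' + twoSidedBowenDist f n y y') / ε := by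
  have key : twoSidedBowenDist f n x' y'
      ≤ twoSidedBowenDist f n x y + (twoSidedBowenDist f n x x' + twoSidedBowenDist f n y y') := by
    calc twoSidedBowenDist f n x' y' ≤ twoSidedBowenDist f n x' x + twoSidedBowenDist f n x y' :=
        bowen_triangle f n x' x y'
      _ ≤ twoSidedBowenDist f n x' x + (twoSidedBowenDist f n x y + twoSidedBowenDist f n y y') :=
        by gcongr; exact bowen_triangle f n x y y'
      _ = _ := by rw [bowen_comm f n x' x]; ring
  have hc : 0 ≤ (twoSidedBowenDist f n x x' + twoSidedBowenDist f n y y') / ε :=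
    div_nonneg (add_nonneg (bowen_nonneg f n x x') (bowen_nonneg f n y y')) hε.le
  refine clamp_le_clamp ?_ hc
  have h2 : twoSidedBowenDist f n x' y' / ε ≤ (twoSidedBowenDist f n x y
      + (twoSidedBowenDist f n x x' + twoSidedBowenDist f n y y')) / ε := by gcongr
  rw [add_div] at h2
  linarith

lemma bump_diff_le (f : Equiv.Perm X) (n : ℕ) {ε : ℝ} (hε : 0 < ε) (x x' y y' : X) :
    |twoSidedBump f n ε x y - twoSidedBump f n ε x' y'|
      ≤ (twoSidedBowenDist f n x x' + twoSidedBowenDist f n y y') / ε := by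
  rw [abs_sub_le_iff]
  constructor
  · linarith [bump_le f n hε x x' y y']
  · have := bump_le f n hε x' x y' y
    rw [bowen_comm f n x' x, bowen_comm f n y' y] at this
    linarith

end Aux

section MeasureAux

variable {X : Type*} [MetricSpace X] [MeasurableSpace X] [BorelSpace X]

/-- `G_{x,ε,n}(μ)`. -/
noncomputable def Gf (f : Equiv.Perm X) (ε : ℝ) (μ : Measure X) (n : ℕ) (x : X) : ℝ :=
  ∫ y, twoSidedBump f n ε x y ∂μ

/-- running minimum `ψ_N(x) = min_{s ≤ n ≤ s+N} G_{x,ε,n}(μ)`. -/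
noncomputable def psiF (f : Equiv.Perm X) (ε : ℝ) (s : ℕ) (μ : Measure X) : ℕ → X → ℝ
  | 0 => Gf f ε μ s
  | (N + 1) => fun x => min (psiF f ε s μ N x) (Gf f ε μ (s + (N + 1)) x)

variable {f : Equiv.Perm X} {ε : ℝ}

lemma bump_continuous_y (hf : UniformContinuous f) (hf' : UniformContinuous f.symm)
    (hε : 0 < ε) (n : ℕ) (x : X) : Continuous fun y => twoSidedBump f n ε x y := by
  refine UniformContinuous.continuous (Metric.uniformContinuous_iff.mpr fun δ hδ => ?_)
  obtain ⟨η, hη, H⟩ := bowen_modulus f hf hf' n (δ := ε * δ / 2) (by positivity)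
  refine ⟨η, hη, fun {a b} hab => ?_⟩
  rw [Real.dist_eq]
  calc |twoSidedBump f n ε x a - twoSidedBump f n ε x b|
      ≤ (twoSidedBowenDist f n x x + twoSidedBowenDist f n a b) / ε :=
        bump_diff_le f n hε x x a b
    _ ≤ (0 + ε * δ / 2) / ε := by gcongr <;> [exact le_of_eq (bowen_self f n x); exact H a b hab]
    _ = δ / 2 := by field_simp; ring
    _ < δ := by linarith

lemma integrable01 {μ : Measure X} [IsFiniteMeasure μ] {g : X → ℝ}
    (hm : AEStronglyMeasurable g μ) (h0 : ∀ y, 0 ≤ g y) (h1 : ∀ y, g y ≤ 1) :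
    Integrable g μ :=
  (integrable_const 1).mono' hm (Filter.Eventually.of_forall fun y => by
    rw [Real.norm_eq_abs, abs_of_nonneg (h0 y)]; exact h1 y)

lemma bump_integrable (hf : UniformContinuous f) (hf' : UniformContinuous f.symm)
    (hε : 0 < ε) {μ : Measure X} [IsFiniteMeasure μ] (n : ℕ) (x : X) :
    Integrable (fun y => twoSidedBump f n ε x y) μ :=
  integrable01 ((bump_continuous_y hf hf' hε n x).aestronglyMeasurable)
    (bump_nonneg f n ε x) (bump_le_one f n ε x)

lemma G_nonneg (μ : Measure X) (n : ℕ) (x : X) : 0 ≤ Gf f ε μ n x :=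
  integral_nonneg (bump_nonneg f n ε x)

lemma G_le_one (hf : UniformContinuous f) (hf' : UniformContinuous f.symm) (hε : 0 < ε)
    (μ : Measure X) [IsProbabilityMeasure μ] (n : ℕ) (x : X) : Gf f ε μ n x ≤ 1 := by
  calc Gf f ε μ n x ≤ ∫ _, (1 : ℝ) ∂μ :=
        integral_mono (bump_integrable hf hf' hε n x) (integrable_const 1)
          (bump_le_one f n ε x)
    _ = 1 := by simp

lemma G_mod (hf : UniformContinuous f) (hf' : UniformContinuous f.symm) (hε : 0 < ε)
    (μ : Measure X) [IsProbabilityMeasure μ] (n : ℕ) (x x' : X) :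
    Gf f ε μ n x ≤ Gf f ε μ n x' + twoSidedBowenDist f n x x' / ε := by
  have hpt : ∀ y, twoSidedBump f n ε x y
      ≤ twoSidedBump f n ε x' y + twoSidedBowenDist f n x x' / ε := fun y => by
    have := bump_le f n hε x x' y y
    rw [bowen_self f n y, add_zero] at this
    exact this
  calc Gf f ε μ n x ≤ ∫ y, (twoSidedBump f n ε x' y + twoSidedBowenDist f n x x' / ε) ∂μ :=
        integral_mono (bump_integrable hf hf' hε n x)
          ((bump_integrable hf hf' hε n x').add (integrable_const _)) hpt
    _ = Gf f ε μ n x' + twoSidedBowenDist f n x x' / ε := by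
        rw [integral_add (bump_integrable hf hf' hε n x') (integrable_const _),
          integral_const]
        simp [Gf]

lemma G_continuous (hf : UniformContinuous f) (hf' : UniformContinuous f.symm) (hε : 0 < ε)
    (μ : Measure X) [IsProbabilityMeasure μ] (n : ℕ) :
    Continuous fun x => Gf f ε μ n x := by
  refine UniformContinuous.continuous (Metric.uniformContinuous_iff.mpr fun δ hδ => ?_)
  obtain ⟨η, hη, H⟩ := bowen_modulus f hf hf' n (δ := ε * δ / 2) (by positivity)
  refine ⟨η, hη, fun {a b} hab => ?_⟩
  rw [Real.dist_eq]
  have hab' : twoSidedBowenDist f n a b / ε ≤ δ / 2 := by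
    calc twoSidedBowenDist f n a b / ε ≤ (ε * δ / 2) / ε := by gcongr; exact H a b hab
      _ = δ / 2 := by field_simp
  have h1 := G_mod hf hf' hε μ n a b
  have h2 := G_mod hf hf' hε μ n b a
  rw [bowen_comm f n b a] at h2
  rw [abs_sub_lt_iff]
  constructor <;> linarith

end MeasureAux

section PsiAux

variable {X : Type*} [MetricSpace X] [MeasurableSpace X] [BorelSpace X]
variable {f : Equiv.Perm X} {ε : ℝ} {s : ℕ}

lemma psi_nonneg (μ : Measure X) (N : ℕ) (x : X) : 0 ≤ psiF f ε s μ N x := by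
  induction N with
  | zero => exact G_nonneg μ s x
  | succ N ih => exact le_min ih (G_nonneg μ _ x)

lemma psi_le_one (hf : UniformContinuous f) (hf' : UniformContinuous f.symm) (hε : 0 < ε)
    (μ : Measure X) [IsProbabilityMeasure μ] (N : ℕ) (x : X) : psiF f ε s μ N x ≤ 1 := by
  induction N with
  | zero => exact G_le_one hf hf' hε μ s x
  | succ N ih => exact min_le_of_left_le ih

lemma psi_continuous (hf : UniformContinuous f) (hf' : UniformContinuous f.symm) (hε : 0 < ε)
    (μ : Measure X) [IsProbabilityMeasure μ] (N : ℕ) :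
    Continuous fun x => psiF f ε s μ N x := by
  induction N with
  | zero => exact G_continuous hf hf' hε μ s
  | succ N ih => exact ih.min (G_continuous hf hf' hε μ _)

lemma psi_succ_le (μ : Measure X) (N : ℕ) (x : X) :
    psiF f ε s μ (N + 1) x ≤ psiF f ε s μ N x := min_le_left _ _

lemma psi_antitone (μ : Measure X) (x : X) : Antitone fun N => psiF f ε s μ N x :=
  antitone_nat_of_succ_le fun N => psi_succ_le μ N x

lemma psi_le_G (μ : Measure X) {N n : ℕ} (h1 : s ≤ n) (h2 : n ≤ s + N) (x : X) :
    psiF f ε s μ N x ≤ Gf f ε μ n x := by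
  induction N with
  | zero => have : n = s := by omega
            subst this; exact le_rfl
  | succ N ih =>
    rcases le_or_gt n (s + N) with h | h
    · exact (min_le_left _ _).trans (ih h)
    · have : n = s + (N + 1) := by omega
      subst this
      exact min_le_right _ _

lemma psi_attained (μ : Measure X) (N : ℕ) (x : X) :
    ∃ n, s ≤ n ∧ n ≤ s + N ∧ psiF f ε s μ N x = Gf f ε μ n x := by
  induction N with
  | zero => exact ⟨s, le_rfl, by omega, rfl⟩
  | succ N ih =>
    obtain ⟨n, hn1, hn2, hEq⟩ := ih
    rcases min_cases (psiF f ε s μ N x) (Gf f ε μ (s + (N + 1)) x) with ⟨h, _⟩ | ⟨h, _⟩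
    · exact ⟨n, hn1, by omega, by simp only [psiF]; rw [h, hEq]⟩
    · exact ⟨s + (N + 1), by omega, le_rfl, by simp only [psiF]; rw [h]⟩

lemma psi_compare {μ ν : Measure X} {x x' : X} {N : ℕ} {c : ℝ}
    (h : ∀ n, s ≤ n → n ≤ s + N → Gf f ε μ n x ≤ Gf f ε ν n x' + c) :
    psiF f ε s μ N x ≤ psiF f ε s ν N x' + c := by
  obtain ⟨n, hn1, hn2, hEq⟩ := psi_attained (f := f) (ε := ε) (s := s) ν N x'
  rw [hEq]
  exact (psi_le_G μ hn1 hn2 x).trans (h n hn1 hn2)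

lemma theta_eq (μ : Measure X) (x : X) :
    thetaLower f μ ε x s = ⨅ N : ℕ, psiF f ε s μ N x := by
  have hbdd : BddBelow (Set.range fun n : {m : ℕ // s ≤ m} =>
      ∫ y, twoSidedBump f (n : ℕ) ε x y ∂μ) := by
    refine ⟨0, fun r hr => ?_⟩
    obtain ⟨n, rfl⟩ := hr
    exact G_nonneg μ n x
  have hbdd' : BddBelow (Set.range fun N : ℕ => psiF f ε s μ N x) := by
    refine ⟨0, fun r hr => ?_⟩
    obtain ⟨N, rfl⟩ := hr
    exact psi_nonneg μ N x
  haveI : Nonempty {m : ℕ // s ≤ m} := ⟨⟨s, le_rfl⟩⟩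
  apply le_antisymm
  · refine le_ciInf fun N => ?_
    obtain ⟨n, hn1, _, hEq⟩ := psi_attained (f := f) (ε := ε) (s := s) μ N x
    rw [hEq]
    exact ciInf_le hbdd (⟨n, hn1⟩ : {m : ℕ // s ≤ m})
  · refine le_ciInf fun n => ?_
    exact (ciInf_le hbdd' ((n : ℕ) - s)).trans
      (psi_le_G μ n.2 (by omega) x)

lemma psi_tendsto (μ : Measure X) (x : X) :
    Filter.Tendsto (fun N => psiF f ε s μ N x) Filter.atTop (nhds (thetaLower f μ ε x s)) := by
  rw [theta_eq]
  exact tendsto_atTop_ciInf (psi_antitone μ x)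
    ⟨0, fun r hr => by obtain ⟨N, rfl⟩ := hr; exact psi_nonneg μ N x⟩

lemma theta_measurable (hf : UniformContinuous f) (hf' : UniformContinuous f.symm) (hε : 0 < ε)
    (μ : Measure X) [IsProbabilityMeasure μ] :
    Measurable fun x => thetaLower f μ ε x s := by
  refine measurable_of_tendsto_metrizable
    (f := fun N x => psiF f ε s μ N x)
    (fun N => (psi_continuous hf hf' hε μ N).measurable) ?_
  rw [tendsto_pi_nhds]
  exact fun x => psi_tendsto μ x

end PsiAux

section LPAux

open Metric Set

variable {X : Type*} [MetricSpace X] [MeasurableSpace X] [BorelSpace X]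

lemma antitone_levelFn {g : X → ℝ} (ν : Measure X) [IsFiniteMeasure ν] :
    Antitone fun u : ℝ => (ν {a | u ≤ g a}).toReal := fun u v huv =>
  ENNReal.toReal_mono (measure_ne_top _ _) (measure_mono fun a ha => le_trans huv ha)

lemma integrableOn_levelFn {g : X → ℝ} (ν : Measure X) [IsProbabilityMeasure ν]
    {c : ℝ} (a b : ℝ) :
    IntegrableOn (fun u : ℝ => (ν {y | u - c ≤ g y}).toReal) (Ioc a b) volume := by
  have anti : Antitone fun u : ℝ => (ν {y | u - c ≤ g y}).toReal := fun u v huv =>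
    antitone_levelFn ν (by linarith : u - c ≤ v - c)
  refine Measure.integrableOn_of_bounded (M := 1) measure_Ioc_lt_top.ne
    anti.measurable.aestronglyMeasurable (Filter.Eventually.of_forall fun u => ?_)
  rw [Real.norm_eq_abs, abs_of_nonneg ENNReal.toReal_nonneg]
  exact (ENNReal.toReal_mono (measure_ne_top _ _) (measure_mono (subset_univ _))).trans
    (by simp)

/-- Key transfer estimate: integrals of `[0,1]`-valued functions with a given modulus of
continuity change little under small Lévy–Prokhorov distance. -/
lemma main_lp {μ ν : Measure X} [IsProbabilityMeasure μ] [IsProbabilityMeasure ν]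
    {g : X → ℝ} (hgc : Continuous g) (hg0 : ∀ y, 0 ≤ g y) (hg1 : ∀ y, g y ≤ 1)
    {r c : ℝ} (hr : 0 < r) (hc : 0 ≤ c)
    (hmod : ∀ a b : X, dist a b < r → g a ≤ g b + c)
    (hLP : levyProkhorovEDist μ ν < ENNReal.ofReal r) :
    ∫ y, g y ∂μ ≤ (∫ y, g y ∂ν) + c + r := by
  have hgint : ∀ (κ : Measure X), IsProbabilityMeasure κ → Integrable g κ := fun κ hκ =>
    integrable01 hgc.aestronglyMeasurable hg0 hg1
  have hμ1 : ∫ y, g y ∂μ ≤ 1 := by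
    calc ∫ y, g y ∂μ ≤ ∫ _, (1 : ℝ) ∂μ :=
          integral_mono (hgint μ inferInstance) (integrable_const 1) hg1
      _ = 1 := by simp
  have hν0 : 0 ≤ ∫ y, g y ∂ν := integral_nonneg hg0
  rcases le_or_gt 1 c with hc1 | hc1
  · linarith
  -- main case : c < 1
  have layer_μ : ∫ y, g y ∂μ = ∫ t in Ioc (0:ℝ) 1, (μ {a | t ≤ g a}).toReal :=
    (hgint μ inferInstance).integral_eq_integral_Ioc_meas_le
      (Filter.Eventually.of_forall hg0) (Filter.Eventually.of_forall hg1)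
  have layer_ν : ∫ y, g y ∂ν = ∫ t in Ioc (0:ℝ) 1, (ν {a | t ≤ g a}).toReal :=
    (hgint ν inferInstance).integral_eq_integral_Ioc_meas_le
      (Filter.Eventually.of_forall hg0) (Filter.Eventually.of_forall hg1)
  have key : ∀ t : ℝ, (μ {a | t ≤ g a}).toReal ≤ (ν {a | t - c ≤ g a}).toReal + r := by
    intro t
    have hmble : MeasurableSet {a : X | t ≤ g a} := hgc.measurable measurableSet_Ici
    have h1 := left_measure_le_of_levyProkhorovEDist_lt hLP hmble
    rw [ENNReal.toReal_ofReal hr.le] at h1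
    have hsub : thickening r {a : X | t ≤ g a} ⊆ {a : X | t - c ≤ g a} := by
      intro a ha
      obtain ⟨b, hb, hdist⟩ := Metric.mem_thickening_iff.mp ha
      have := hmod b a (by rwa [dist_comm])
      have hb' : t ≤ g b := hb
      simp only [Set.mem_setOf_eq]
      linarith
    have h2 : μ {a | t ≤ g a} ≤ ν {a | t - c ≤ g a} + ENNReal.ofReal r :=
      h1.trans (add_le_add (measure_mono hsub) le_rfl)
    calc (μ {a | t ≤ g a}).toReal
        ≤ (ν {a | t - c ≤ g a} + ENNReal.ofReal r).toReal :=
          ENNReal.toReal_mono (by finiteness) h2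
      _ = (ν {a | t - c ≤ g a}).toReal + r := by
          rw [ENNReal.toReal_add (measure_ne_top _ _) ENNReal.ofReal_ne_top,
            ENNReal.toReal_ofReal hr.le]
  have int_μside : IntegrableOn (fun t : ℝ => (μ {a | t ≤ g a}).toReal) (Ioc (0:ℝ) 1) volume := by
    simpa using integrableOn_levelFn (g := g) μ (c := 0) 0 1
  have int_νshift : IntegrableOn (fun t : ℝ => (ν {a | t - c ≤ g a}).toReal)
      (Ioc (0:ℝ) 1) volume := integrableOn_levelFn ν 0 1
  have step1 : ∫ t in Ioc (0:ℝ) 1, (μ {a | t ≤ g a}).toReal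
      ≤ ∫ t in Ioc (0:ℝ) 1, ((ν {a | t - c ≤ g a}).toReal + r) :=
    setIntegral_mono_on int_μside (int_νshift.add (integrableOn_const
      measure_Ioc_lt_top.ne)) measurableSet_Ioc fun t _ => key t
  have step2 : ∫ t in Ioc (0:ℝ) 1, ((ν {a | t - c ≤ g a}).toReal + r)
      = (∫ t in Ioc (0:ℝ) 1, (ν {a | t - c ≤ g a}).toReal) + r := by
    rw [integral_add int_νshift (integrableOn_const measure_Ioc_lt_top.ne)]
    simp [Real.volume_Ioc]
  -- change of variables
  have hFint : ∀ a b : ℝ, IntegrableOn (fun u : ℝ => (ν {y | u ≤ g y}).toReal)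
      (Ioc a b) volume := fun a b => by
    simpa using integrableOn_levelFn (g := g) ν (c := 0) a b
  have step3 : ∫ t in Ioc (0:ℝ) 1, (ν {a | t - c ≤ g a}).toReal
      = ∫ u in Ioc (-c) (1 - c), (ν {a | u ≤ g a}).toReal := by
    rw [← intervalIntegral.integral_of_le (by norm_num : (0:ℝ) ≤ 1),
      intervalIntegral.integral_comp_sub_right (fun u => (ν {a | u ≤ g a}).toReal) c,
      intervalIntegral.integral_of_le (by linarith : (0:ℝ) - c ≤ 1 - c)]
    norm_num
  have step4 : ∫ u in Ioc (-c) (1 - c), (ν {a | u ≤ g a}).toReal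
      ≤ ∫ u in Ioc (-c) 1, (ν {a | u ≤ g a}).toReal := by
    refine setIntegral_mono_set (hFint _ _)
      (Filter.Eventually.of_forall fun u => ENNReal.toReal_nonneg)
      (HasSubset.Subset.eventuallyLE (Ioc_subset_Ioc_right (by linarith)))
  have step5 : ∫ u in Ioc (-c) 1, (ν {a | u ≤ g a}).toReal
      = (∫ u in Ioc (-c) 0, (ν {a | u ≤ g a}).toReal)
        + ∫ u in Ioc (0:ℝ) 1, (ν {a | u ≤ g a}).toReal := by
    rw [← setIntegral_union (Set.Ioc_disjoint_Ioc_of_le le_rfl) measurableSet_Ioc (hFint _ _) (hFint _ _),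
      Set.Ioc_union_Ioc_eq_Ioc (by linarith) (by norm_num)]
  have step6 : ∫ u in Ioc (-c) 0, (ν {a | u ≤ g a}).toReal ≤ c := by
    have hb : ∀ u ∈ Ioc (-c) (0:ℝ), ‖(ν {a | u ≤ g a}).toReal‖ ≤ 1 := fun u _ => by
      rw [Real.norm_eq_abs, abs_of_nonneg ENNReal.toReal_nonneg]
      exact (ENNReal.toReal_mono (measure_ne_top _ _) (measure_mono (subset_univ _))).trans
        (by simp)
    have := norm_setIntegral_le_of_norm_le_const (C := 1)
      (measure_Ioc_lt_top (μ := volume) (a := -c) (b := (0:ℝ))) hb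
    rw [measureReal_def, Real.volume_Ioc] at this
    have h0 : ((ENNReal.ofReal (0 - -c)).toReal) = c := by
      rw [ENNReal.toReal_ofReal (by linarith)]; ring
    rw [h0, one_mul] at this
    exact (le_abs_self _).trans (by simpa [Real.norm_eq_abs] using this)
  rw [layer_μ]
  rw [layer_ν]
  calc ∫ t in Ioc (0:ℝ) 1, (μ {a | t ≤ g a}).toReal
      ≤ (∫ t in Ioc (0:ℝ) 1, (ν {a | t - c ≤ g a}).toReal) + r := step1.trans (le_of_eq step2)
    _ ≤ ((∫ u in Ioc (-c) 0, (ν {a | u ≤ g a}).toReal)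
          + ∫ u in Ioc (0:ℝ) 1, (ν {a | u ≤ g a}).toReal) + r := by
        rw [step3]; gcongr
        exact step4.trans (le_of_eq step5)
    _ ≤ ((∫ u in Ioc (0:ℝ) 1, (ν {a | u ≤ g a}).toReal) + c) + r := by linarith
    _ = _ := by ring

end LPAux

section HAux

variable {X : Type*} [MetricSpace X] [MeasurableSpace X] [BorelSpace X]

/-- truncated excess of `ψ_N` over `α`. -/
noncomputable def HnF (f : Equiv.Perm X) (ε : ℝ) (s : ℕ) (α : ℝ) (μ : Measure X) (N : ℕ)
    (x : X) : ℝ := max 0 (min 1 (psiF f ε s μ N x - α))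

/-- truncated excess of `θ̲` over `α`. -/
noncomputable def HF (f : Equiv.Perm X) (ε : ℝ) (s : ℕ) (α : ℝ) (μ : Measure X) (x : X) : ℝ :=
  max 0 (min 1 (thetaLower f μ ε x s - α))

variable {f : Equiv.Perm X} {ε α : ℝ} {s : ℕ}

lemma Hn_nonneg (μ : Measure X) (N : ℕ) (x : X) : 0 ≤ HnF f ε s α μ N x := le_max_left _ _

lemma Hn_le_one (μ : Measure X) (N : ℕ) (x : X) : HnF f ε s α μ N x ≤ 1 :=
  max_le zero_le_one (min_le_left _ _)

lemma H_nonneg (μ : Measure X) (x : X) : 0 ≤ HF f ε s α μ x := le_max_left _ _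

lemma H_le_one (μ : Measure X) (x : X) : HF f ε s α μ x ≤ 1 :=
  max_le zero_le_one (min_le_left _ _)

lemma Hn_continuous (hf : UniformContinuous f) (hf' : UniformContinuous f.symm) (hε : 0 < ε)
    (μ : Measure X) [IsProbabilityMeasure μ] (N : ℕ) :
    Continuous fun x => HnF f ε s α μ N x :=
  continuous_const.max (continuous_const.min
    ((psi_continuous hf hf' hε μ N).sub continuous_const))

lemma Hn_integrable (hf : UniformContinuous f) (hf' : UniformContinuous f.symm) (hε : 0 < ε)
    (μ ν : Measure X) [IsProbabilityMeasure μ] [IsProbabilityMeasure ν] (N : ℕ) :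
    Integrable (fun x => HnF f ε s α μ N x) ν :=
  integrable01 (Hn_continuous hf hf' hε μ N).aestronglyMeasurable
    (Hn_nonneg μ N) (Hn_le_one μ N)

lemma H_integrable (hf : UniformContinuous f) (hf' : UniformContinuous f.symm) (hε : 0 < ε)
    (μ : Measure X) [IsProbabilityMeasure μ] :
    Integrable (fun x => HF f ε s α μ x) μ := by
  have hm : Measurable fun x => HF f ε s α μ x :=
    measurable_const.max (measurable_const.min
      ((theta_measurable hf hf' hε μ).sub measurable_const))
  exact integrable01 hm.aestronglyMeasurable (H_nonneg μ) (H_le_one μ)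

lemma H_le_Hn (μ : Measure X) (N : ℕ) (x : X) :
    HF f ε s α μ x ≤ HnF f ε s α μ N x := by
  have h : thetaLower f μ ε x s ≤ psiF f ε s μ N x := by
    rw [theta_eq]
    exact ciInf_le ⟨0, fun r hr => by obtain ⟨M, rfl⟩ := hr; exact psi_nonneg μ M x⟩ N
  exact max_le_max le_rfl (min_le_min le_rfl (by linarith))

lemma H_tendsto (μ : Measure X) (x : X) :
    Filter.Tendsto (fun N => HnF f ε s α μ N x) Filter.atTop (nhds (HF f ε s α μ x)) :=
  Filter.Tendsto.max tendsto_const_nhds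
    (Filter.Tendsto.min tendsto_const_nhds ((psi_tendsto μ x).sub_const α))

end HAux

section OpenAux

open Metric Set

variable {X : Type*} [MetricSpace X] [PolishSpace X] [MeasurableSpace X] [BorelSpace X]
variable {f : Equiv.Perm X} {ε α : ℝ} {s : ℕ}

lemma isOpen_PhiN (hf : UniformContinuous f) (hf' : UniformContinuous f.symm) (hε : 0 < ε)
    (N : ℕ) (c : ℝ) :
    IsOpen {μ : ProbabilityMeasure X |
      ∫ x, HnF f ε s α (↑μ) N x ∂(μ : Measure X) < c} := by
  set T : Set (LevyProkhorov (ProbabilityMeasure X)) :=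
    {μ : LevyProkhorov (ProbabilityMeasure X) | ∫ x, HnF f ε s α (↑μ.toMeasure) N x ∂(μ.toMeasure : Measure X) < c} with hT
  have hTopen : IsOpen T := by
    rw [Metric.isOpen_iff]
    intro ν hν
    set ν' : ProbabilityMeasure X := ν.toMeasure with hν'
    have hνmem : ∫ x, HnF f ε s α (↑ν') N x ∂(ν' : Measure X) < c := hν
    set γ : ℝ := c - ∫ x, HnF f ε s α (↑ν') N x ∂(ν' : Measure X) with hγdef
    have hγ : 0 < γ := by simp only [hγdef]; linarith
    obtain ⟨η, hη, Hmod⟩ := bowen_modulus f hf hf' (s + N) (δ := ε * (γ / 8)) (by positivity)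
    set r : ℝ := min η (γ / 8) with hrdef
    have hr : 0 < r := lt_min hη (by positivity)
    refine ⟨r, hr, fun κ hκ => ?_⟩
    set κ' : ProbabilityMeasure X := κ.toMeasure with hκ'
    -- LP distance facts
    have hdist : dist κ ν < r := hκ
    rw [LevyProkhorov.dist_probabilityMeasure_def, levyProkhorovDist] at hdist
    have hLP1 : levyProkhorovEDist (κ' : Measure X) (ν' : Measure X) < ENNReal.ofReal r :=
      (ENNReal.lt_ofReal_iff_toReal_lt (levyProkhorovEDist_ne_top _ _)).mpr hdist
    have hLP2 : levyProkhorovEDist (ν' : Measure X) (κ' : Measure X) < ENNReal.ofReal r := by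
      rwa [levyProkhorovEDist_comm]
    -- modulus facts
    have hDr : ∀ (n : ℕ), n ≤ s + N → ∀ a b : X, dist a b < r →
        twoSidedBowenDist f n a b / ε ≤ γ / 8 := by
      intro n hn a b hab
      have h1 : twoSidedBowenDist f n a b ≤ ε * (γ / 8) :=
        (bowen_mono f hn a b).trans (Hmod a b (hab.trans_le (min_le_left _ _)))
      calc twoSidedBowenDist f n a b / ε ≤ (ε * (γ / 8)) / ε := by gcongr
        _ = γ / 8 := by field_simp
    have hmodB : ∀ (n : ℕ), s ≤ n → n ≤ s + N → ∀ x a b : X, dist a b < r →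
        twoSidedBump f n ε x a ≤ twoSidedBump f n ε x b + γ / 8 := by
      intro n _ hn x a b hab
      have := bump_le f n hε x x a b
      rw [bowen_self f n x, zero_add] at this
      exact this.trans (by linarith [hDr n hn a b hab])
    -- step 1 : compare G's
    have h1 : ∀ (n : ℕ), s ≤ n → n ≤ s + N → ∀ x : X,
        Gf f ε (κ' : Measure X) n x ≤ Gf f ε (ν' : Measure X) n x + (γ / 8 + r) := by
      intro n hsn hn x
      have := main_lp (μ := (κ' : Measure X)) (ν := (ν' : Measure X))
        (g := fun y => twoSidedBump f n ε x y) (bump_continuous_y hf hf' hε n x)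
        (bump_nonneg f n ε x) (bump_le_one f n ε x) hr (by positivity)
        (fun a b hab => hmodB n hsn hn x a b hab) hLP1
      simp only [Gf]
      linarith
    -- step 2 : compare Hn's pointwise
    have h2 : ∀ x : X, HnF f ε s α (κ' : Measure X) N x
        ≤ HnF f ε s α (ν' : Measure X) N x + (γ / 8 + r) := by
      intro x
      have hpsi : psiF f ε s (κ' : Measure X) N x
          ≤ psiF f ε s (ν' : Measure X) N x + (γ / 8 + r) :=
        psi_compare fun n hsn hn => h1 n hsn hn x
      exact clamp_le_clamp (by linarith) (by positivity)
    -- step 3 : integrate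
    have h3 : ∫ x, HnF f ε s α (κ' : Measure X) N x ∂(κ' : Measure X)
        ≤ (∫ x, HnF f ε s α (ν' : Measure X) N x ∂(κ' : Measure X)) + (γ / 8 + r) := by
      calc ∫ x, HnF f ε s α (κ' : Measure X) N x ∂(κ' : Measure X)
          ≤ ∫ x, (HnF f ε s α (ν' : Measure X) N x + (γ / 8 + r)) ∂(κ' : Measure X) :=
            integral_mono (Hn_integrable hf hf' hε _ _ N)
              ((Hn_integrable hf hf' hε _ _ N).add (integrable_const _)) h2
        _ = _ := by
            rw [integral_add (Hn_integrable hf hf' hε _ _ N) (integrable_const _),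
              integral_const]
            simp
    -- step 4 : move the measure
    have hmodH : ∀ a b : X, dist a b < r →
        HnF f ε s α (ν' : Measure X) N a ≤ HnF f ε s α (ν' : Measure X) N b + γ / 8 := by
      intro a b hab
      have hpsi : psiF f ε s (ν' : Measure X) N a
          ≤ psiF f ε s (ν' : Measure X) N b + γ / 8 := by
        refine psi_compare fun n hsn hn => ?_
        exact (G_mod hf hf' hε _ n a b).trans (by linarith [hDr n hn a b hab])
      exact clamp_le_clamp (by linarith) (by positivity)
    have h4 : ∫ x, HnF f ε s α (ν' : Measure X) N x ∂(κ' : Measure X)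
        ≤ (∫ x, HnF f ε s α (ν' : Measure X) N x ∂(ν' : Measure X)) + γ / 8 + r :=
      main_lp (Hn_continuous hf hf' hε _ N) (Hn_nonneg _ N) (Hn_le_one _ N) hr
        (by positivity) hmodH hLP1
    have hrle : r ≤ γ / 8 := min_le_right _ _
    show ∫ x, HnF f ε s α (↑κ') N x ∂(κ' : Measure X) < c
    have := hγdef
    linarith
  exact (LevyProkhorov.probabilityMeasureHomeomorph
    (Ω := X)).isOpen_preimage.mpr hTopen

end OpenAux

theorem stmt18 {X : Type*} [MetricSpace X] [PolishSpace X] [MeasurableSpace X] [BorelSpace X]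
    (f : Equiv.Perm X) (hf : UniformContinuous f) (hf' : UniformContinuous f.symm)
    (α ε : ℝ) (hα : 0 < α) (hε : 0 < ε) (s : ℕ) :
    IsGδ {μ : ProbabilityMeasure X |
      ∀ᵐ x ∂(μ : Measure X), thetaLower f (μ : Measure X) ε x s ≤ α} := by
  have hset : {μ : ProbabilityMeasure X |
      ∀ᵐ x ∂(μ : Measure X), thetaLower f (μ : Measure X) ε x s ≤ α}
      = ⋂ m : ℕ, ⋃ N : ℕ, {μ : ProbabilityMeasure X |
          ∫ x, HnF f ε s α (↑μ) N x ∂(μ : Measure X) < 1 / (m + 1)} := by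
    ext μ
    simp only [Set.mem_setOf_eq, Set.mem_iInter, Set.mem_iUnion]
    constructor
    · intro hae m
      have hH0 : (fun x => HF f ε s α (↑μ) x) =ᵐ[(μ : Measure X)] 0 := by
        filter_upwards [hae] with x hx
        have h1 : thetaLower f (↑μ) ε x s - α ≤ 0 := by linarith
        simp only [HF, Pi.zero_apply]
        exact max_eq_left ((min_le_right _ _).trans h1)
      have hΦ0 : ∫ x, HF f ε s α (↑μ) x ∂(μ : Measure X) = 0 := by
        rw [integral_congr_ae hH0]; simp
      have htend : Filter.Tendsto (fun N => ∫ x, HnF f ε s α (↑μ) N x ∂(μ : Measure X))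
          Filter.atTop (nhds 0) := by
        rw [← hΦ0]
        refine tendsto_integral_of_dominated_convergence (bound := fun _ => (1 : ℝ))
          (fun N => (Hn_continuous hf hf' hε _ N).aestronglyMeasurable)
          (integrable_const 1) (fun N => Filter.Eventually.of_forall fun x => ?_)
          (Filter.Eventually.of_forall fun x => H_tendsto _ x)
        rw [Real.norm_eq_abs, abs_of_nonneg (Hn_nonneg _ N x)]
        exact Hn_le_one _ N x
      exact (htend.eventually_lt_const (by positivity : (0:ℝ) < 1 / (m + 1))).exists
    · intro hall
      have hΦle : ∀ N, ∫ x, HF f ε s α (↑μ) x ∂(μ : Measure X)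
          ≤ ∫ x, HnF f ε s α (↑μ) N x ∂(μ : Measure X) := fun N =>
        integral_mono (H_integrable hf hf' hε _) (Hn_integrable hf hf' hε _ _ N)
          (H_le_Hn _ N)
      have hpos : 0 ≤ ∫ x, HF f ε s α (↑μ) x ∂(μ : Measure X) :=
        integral_nonneg (H_nonneg _)
      have hΦ0 : ∫ x, HF f ε s α (↑μ) x ∂(μ : Measure X) = 0 := by
        by_contra h
        have hgt : 0 < ∫ x, HF f ε s α (↑μ) x ∂(μ : Measure X) :=
          lt_of_le_of_ne hpos (Ne.symm h)
        obtain ⟨m, hm⟩ := exists_nat_one_div_lt hgt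
        obtain ⟨N, hN⟩ := hall m
        have := hΦle N
        push_cast at hm
        linarith
      have hH0 : (fun x => HF f ε s α (↑μ) x) =ᵐ[(μ : Measure X)] 0 :=
        (integral_eq_zero_iff_of_nonneg_ae (Filter.Eventually.of_forall (H_nonneg _))
          (H_integrable hf hf' hε _)).mp hΦ0
      filter_upwards [hH0] with x hx
      by_contra hgt
      push_neg at hgt
      have h1 : 0 < min 1 (thetaLower f (↑μ) ε x s - α) :=
        lt_min one_pos (by linarith)
      have h2 : HF f ε s α (↑μ) x = 0 := hx
      simp only [HF] at h2
      have := le_max_right (0:ℝ) (min 1 (thetaLower f (↑μ) ε x s - α))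
      linarith
  rw [hset]
  exact IsGδ.iInter_of_isOpen fun m =>
    isOpen_iUnion fun N => isOpen_PhiN hf hf' hε N _
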